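/- Let n ≥ 3 and let ε₁,ε₂,ε₃,η₁,η₂,η₃ be 2ⁿ-th roots of unity with ε₁ε₂ε₃ = 1, η₁η₂η₃ = 1, all quotients δᵢ = εᵢ⁻¹ηᵢ being 4-th roots of unity, and with some εᵢ of multiplicative order at least 8. If ε₁ + ε₂ + ε₃ + η₁ + η₂ + η₃ = 0, then the set {δ₁, δ₂, δ₃} equals either {i, -1} or {-i, -1}, where i is a primitive 4-th root of unity. -/
import Mathlib

lemma absOne' (m : ℕ) (hm : m ≠ 0) (x : ℂ) (hx : x ^ m = 1) : ‖x‖ = 1 := by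
  have h := congrArg norm hx
  rw [norm_pow, norm_one] at h
  have h0 : (0:ℝ) ≤ ‖x‖ := norm_nonneg x
  rcases pow_eq_one_iff_cases.mp h with h1 | h1 | h1 <;> first | omega | assumption | linarith

lemma conjInv' (m : ℕ) (hm : m ≠ 0) (x : ℂ) (hx : x ^ m = 1) : (starRingEnd ℂ) x = x⁻¹ :=
  (Complex.inv_eq_conj (by simpa using absOne' m hm x hx)).symm

lemma neZero'' (m : ℕ) (hm : m ≠ 0) (x : ℂ) (hx : x ^ m = 1) : x ≠ 0 := by
  intro h; rw [h, zero_pow hm] at hx; exact zero_ne_one hx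

lemma eqOne' (n : ℕ) (x : ℂ) (h2 : x ^ 2 ^ n = 1) (h3 : x ^ 3 = 1) : x = 1 := by
  have hd1 : orderOf x ∣ 3 := orderOf_dvd_of_pow_eq_one h3
  have hd2 : orderOf x ∣ 2 ^ n := orderOf_dvd_of_pow_eq_one h2
  have hc : Nat.Coprime 3 (2 ^ n) := Nat.Coprime.pow_right n (by norm_num)
  exact orderOf_eq_one_iff.mp (Nat.eq_one_of_dvd_coprimes hc hd1 hd2)

lemma I4' : Complex.I ^ 4 = 1 := by
  rw [show (4:ℕ) = 2*2 from rfl, pow_mul, Complex.I_sq]; norm_num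

lemma pow4_cases' (x : ℂ) (h : x ^ 4 = 1) : x = 1 ∨ x = -1 ∨ x = Complex.I ∨ x = -Complex.I := by
  have key : (x - 1) * (x + 1) * (x - Complex.I) * (x + Complex.I) = 0 := by
    linear_combination h + (1 - x^2) * Complex.I_sq
  rcases mul_eq_zero.mp key with h' | h'
  · rcases mul_eq_zero.mp h' with h'' | h''
    · rcases mul_eq_zero.mp h'' with h3 | h3
      · left; linear_combination h3
      · right; left; linear_combination h3
    · right; right; left; linear_combination h''
  · right; right; right; linear_combination h'

lemma auxA' (n : ℕ) (x y z : ℂ) (hx : x ^ 2 ^ n = 1) (hy : y ^ 2 ^ n = 1) (hz : z ^ 2 ^ n = 1)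
    (hp : x * y * z = 1) (heq : x + y + z = 0) : False := by
  have hm : (2:ℕ) ^ n ≠ 0 := by positivity
  have hx0 := neZero'' _ hm x hx
  have hy0 := neZero'' _ hm y hy
  have hz0 := neZero'' _ hm z hz
  have h2 := congrArg (starRingEnd ℂ) heq
  simp only [map_add, map_zero, conjInv' _ hm x hx, conjInv' _ hm y hy, conjInv' _ hm z hz] at h2
  field_simp at h2
  have hx1 : x = 1 := eqOne' n x hx (by linear_combination x^2 * heq - x * h2 + hp)
  have hy1 : y = 1 := eqOne' n y hy (by linear_combination y^2 * heq - y * h2 + hp)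
  have hz1 : z = 1 := eqOne' n z hz (by linear_combination z^2 * heq - z * h2 + hp)
  rw [hx1, hy1, hz1] at heq
  norm_num at heq

lemma auxB' (n : ℕ) (x y z : ℂ) (hx : x ^ 2 ^ n = 1) (hy : y ^ 2 ^ n = 1) (hz : z ^ 2 ^ n = 1)
    (hp : x * y * z = 1)
    (heq : 2*x + (1+Complex.I)*y + (1-Complex.I)*z = 0) :
    x ^ 4 = 1 ∧ y ^ 4 = 1 ∧ z ^ 4 = 1 := by
  have hm : (2:ℕ) ^ n ≠ 0 := by positivity
  have hx0 := neZero'' _ hm x hx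
  have hy0 := neZero'' _ hm y hy
  have hz0 := neZero'' _ hm z hz
  have h2 := congrArg (starRingEnd ℂ) heq
  simp only [map_add, map_mul, map_sub, map_one, map_ofNat, map_zero, Complex.conj_I,
    conjInv' _ hm x hx, conjInv' _ hm y hy, conjInv' _ hm z hz] at h2
  field_simp at h2
  have h1i : (1:ℂ) - Complex.I ≠ 0 := by simp [Complex.ext_iff]
  have hzz : (1 - Complex.I) * z = (1 - Complex.I) * (-(1+Complex.I)*x - Complex.I*y) := by
    linear_combination heq - (x + y) * Complex.I_sq
  have hz' := mul_left_cancel₀ h1i hzz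
  rw [hz'] at h2
  have key : (y + x) * (y - Complex.I*x) = 0 := by
    linear_combination (Complex.I/2) * h2 + (y^2 + (2-Complex.I)/2*x*y - Complex.I/2*x^2) * Complex.I_sq
  rcases mul_eq_zero.mp key with hk | hk
  · have hy' : y = -x := by linear_combination hk
    rw [hy'] at hz' hp
    have hz2 : z = -x := by linear_combination hz'
    rw [hz2] at hp
    have hx1 : x = 1 := eqOne' n x hx (by linear_combination hp)
    rw [hx1] at hy' hz2
    rw [hx1, hy', hz2]; norm_num
  · have hy' : y = Complex.I * x := by linear_combination hk
    rw [hy'] at hz' hp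
    have hz2 : z = -Complex.I * x := by linear_combination hz' - x * Complex.I_sq
    rw [hz2] at hp
    have hx1 : x = 1 := eqOne' n x hx (by linear_combination hp + x^3 * Complex.I_sq)
    rw [hx1] at hy' hz2
    rw [hx1, hy', hz2]
    exact ⟨by norm_num, by rw [mul_one, I4'], by rw [mul_one, show (-Complex.I)^4 = Complex.I^4 by ring, I4']⟩

lemma hoContra' (ε : Fin 3 → ℂ) (h0 : ε 0 ^ 4 = 1) (h1 : ε 1 ^ 4 = 1) (h2 : ε 2 ^ 4 = 1)
    (ho : ∃ i, 8 ≤ orderOf (ε i)) : False := by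
  obtain ⟨i, hi⟩ := ho
  have h4 : ε i ^ 4 = 1 := by fin_cases i <;> assumption
  have := Nat.le_of_dvd (by norm_num) (orderOf_dvd_of_pow_eq_one h4)
  omega

set_option maxHeartbeats 2000000 in
theorem quotient_set_of_vanishing_sum (n : ℕ) (hn : 3 ≤ n) (ε η : Fin 3 → ℂ)
    (hε : ∀ i, ε i ^ (2 ^ n) = 1) (hη : ∀ i, η i ^ (2 ^ n) = 1)
    (hpε : ε 0 * ε 1 * ε 2 = 1) (hpη : η 0 * η 1 * η 2 = 1)
    (hδ : ∀ i, ((ε i)⁻¹ * η i) ^ 4 = 1)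
    (ho : ∃ i, 8 ≤ orderOf (ε i))
    (hsum : ε 0 + ε 1 + ε 2 + η 0 + η 1 + η 2 = 0) :
    ({(ε 0)⁻¹ * η 0, (ε 1)⁻¹ * η 1, (ε 2)⁻¹ * η 2} : Set ℂ) = {Complex.I, -1} ∨
    ({(ε 0)⁻¹ * η 0, (ε 1)⁻¹ * η 1, (ε 2)⁻¹ * η 2} : Set ℂ) = {-Complex.I, -1} := by
  have hm : (2:ℕ) ^ n ≠ 0 := by positivity
  have hε0 := neZero'' _ hm _ (hε 0)
  have hε1 := neZero'' _ hm _ (hε 1)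
  have hε2 := neZero'' _ hm _ (hε 2)
  have hη0eq : η 0 = ε 0 * ((ε 0)⁻¹ * η 0) := (mul_inv_cancel_left₀ hε0 (η 0)).symm
  have hη1eq : η 1 = ε 1 * ((ε 1)⁻¹ * η 1) := (mul_inv_cancel_left₀ hε1 (η 1)).symm
  have hη2eq : η 2 = ε 2 * ((ε 2)⁻¹ * η 2) := (mul_inv_cancel_left₀ hε2 (η 2)).symm
  rw [hη0eq, hη1eq, hη2eq] at hsum hpη
  have habc : ((ε 0)⁻¹ * η 0) * (((ε 1)⁻¹ * η 1) * ((ε 2)⁻¹ * η 2)) = 1 := by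
    have h : (ε 0 * ε 1 * ε 2) * (((ε 0)⁻¹ * η 0) * (((ε 1)⁻¹ * η 1) * ((ε 2)⁻¹ * η 2))) = 1 := by
      linear_combination hpη
    rw [hpε, one_mul] at h
    exact h
  rcases pow4_cases' _ (hδ 0) with h0 | h0 | h0 | h0 <;>
  rcases pow4_cases' _ (hδ 1) with h1 | h1 | h1 | h1 <;>
  rcases pow4_cases' _ (hδ 2) with h2 | h2 | h2 | h2 <;>
  rw [h0, h1, h2] at hsum habc ⊢ <;>
  first
  | (norm_num [Complex.ext_iff] at habc; done)
  | (left; ext w; simp only [Set.mem_insert_iff, Set.mem_singleton_iff]; tauto)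
  | (right; ext w; simp only [Set.mem_insert_iff, Set.mem_singleton_iff]; tauto)
  | (refine absurd ?_ hε0; linear_combination hsum/2)
  | (refine absurd ?_ hε1; linear_combination hsum/2)
  | (refine absurd ?_ hε2; linear_combination hsum/2)
  | (refine (auxA' n (ε 0) (ε 1) (ε 2) (hε 0) (hε 1) (hε 2) hpε ?_).elim; linear_combination hsum/2)
  | (refine absurd (auxB' n (ε 0) (ε 1) (ε 2) (hε 0) (hε 1) (hε 2) ?_ ?_)
      (fun H => hoContra' ε H.1 H.2.1 H.2.2 ho) <;>
      first | linear_combination hpε | linear_combination hsum)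
  | (refine absurd (auxB' n (ε 0) (ε 2) (ε 1) (hε 0) (hε 2) (hε 1) ?_ ?_)
      (fun H => hoContra' ε H.1 H.2.2 H.2.1 ho) <;>
      first | linear_combination hpε | linear_combination hsum)
  | (refine absurd (auxB' n (ε 1) (ε 0) (ε 2) (hε 1) (hε 0) (hε 2) ?_ ?_)
      (fun H => hoContra' ε H.2.1 H.1 H.2.2 ho) <;>
      first | linear_combination hpε | linear_combination hsum)
  | (refine absurd (auxB' n (ε 1) (ε 2) (ε 0) (hε 1) (hε 2) (hε 0) ?_ ?_)
      (fun H => hoContra' ε H.2.2 H.1 H.2.1 ho) <;>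
      first | linear_combination hpε | linear_combination hsum)
  | (refine absurd (auxB' n (ε 2) (ε 0) (ε 1) (hε 2) (hε 0) (hε 1) ?_ ?_)
      (fun H => hoContra' ε H.2.1 H.2.2 H.1 ho) <;>
      first | linear_combination hpε | linear_combination hsum)
  | (refine absurd (auxB' n (ε 2) (ε 1) (ε 0) (hε 2) (hε 1) (hε 0) ?_ ?_)
      (fun H => hoContra' ε H.2.2 H.2.1 H.1 ho) <;>
      first | linear_combination hpε | linear_combination hsum)
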